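/- For every g ≥ 3, the symplectic group Sp_{2g}(ℤ) is perfect; equivalently, its abelianisation is the trivial group. -/

import Mathlib

open Matrix

/-- Index type for `2g × 2g` matrices: the first `g` indices correspond to the
basis vectors `e₁, …, e_g` and the last `g` to `f₁, …, f_g`. -/
abbrev HypIdx (g : ℕ) := Fin g ⊕ Fin g

/-- Gram matrix of the orthogonal sum of `g` hyperbolic planes. -/
def Qmat (g : ℕ) : Matrix (HypIdx g) (HypIdx g) ℤ := Matrix.fromBlocks 0 1 1 0

/-- The standard symplectic form matrix. -/
def Jmat (g : ℕ) : Matrix (HypIdx g) (HypIdx g) ℤ := Matrix.fromBlocks 0 1 (-1) 0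

/-- The subgroup of `GL_{2g}(ℤ)` of matrices `A` with `Aᵀ * Q * A = Q`. -/
def formGroup (g : ℕ) (Q : Matrix (HypIdx g) (HypIdx g) ℤ) :
    Subgroup (GL (HypIdx g) ℤ) where
  carrier := {A | A.valᵀ * Q * A.val = Q}
  one_mem' := by simp
  mul_mem' := by
    intro A B hA hB
    have hA' : A.valᵀ * Q * A.val = Q := hA
    have hB' : B.valᵀ * Q * B.val = Q := hB
    show (A * B).valᵀ * Q * (A * B).val = Q
    rw [Units.val_mul, transpose_mul]
    calc B.valᵀ * A.valᵀ * Q * (A.val * B.val)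
        = B.valᵀ * (A.valᵀ * Q * A.val) * B.val := by noncomm_ring
      _ = B.valᵀ * Q * B.val := by rw [hA']
      _ = Q := hB'
  inv_mem' := by
    intro A hA
    have hA' : A.valᵀ * Q * A.val = Q := hA
    show (A⁻¹).valᵀ * Q * (A⁻¹).val = Q
    have h1 : A.val * (A⁻¹).val = 1 := by
      rw [← Units.val_mul, mul_inv_cancel, Units.val_one]
    calc (A⁻¹).valᵀ * Q * (A⁻¹).val
        = (A⁻¹).valᵀ * (A.valᵀ * Q * A.val) * (A⁻¹).val := by rw [hA']
      _ = (A.val * (A⁻¹).val)ᵀ * Q * (A.val * (A⁻¹).val) := by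
          rw [transpose_mul]; noncomm_ring
      _ = Q := by rw [h1]; simp

/-- `O_{g,g}(ℤ)`. -/
def Ogg (g : ℕ) : Subgroup (GL (HypIdx g) ℤ) := formGroup g (Qmat g)

/-- `Sp_{2g}(ℤ)`. -/
def Sp (g : ℕ) : Subgroup (GL (HypIdx g) ℤ) := formGroup g (Jmat g)

/-- The standard quadratic refinement `q(x, y) = Σᵢ xᵢ yᵢ mod 2`. -/
def qform (g : ℕ) (v : HypIdx g → ℤ) : ZMod 2 :=
  ∑ i : Fin g, ((v (Sum.inl i) * v (Sum.inr i) : ℤ) : ZMod 2)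

/-- The subgroup of `GL_{2g}(ℤ)` preserving the quadratic refinement `q`. -/
def qPreserving (g : ℕ) : Subgroup (GL (HypIdx g) ℤ) where
  carrier := {A | ∀ v : HypIdx g → ℤ, qform g (A.val.mulVec v) = qform g v}
  one_mem' := by intro v; simp
  mul_mem' := by
    intro A B hA hB v
    show qform g ((A * B).val.mulVec v) = qform g v
    rw [Units.val_mul, ← Matrix.mulVec_mulVec, hA, hB]
  inv_mem' := by
    intro A hA v
    have h1 : A.val.mulVec ((A⁻¹).val.mulVec v) = v := by
      rw [Matrix.mulVec_mulVec, ← Units.val_mul, mul_inv_cancel, Units.val_one,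
        Matrix.one_mulVec]
    calc qform g ((A⁻¹).val.mulVec v)
        = qform g (A.val.mulVec ((A⁻¹).val.mulVec v)) := (hA _).symm
      _ = qform g v := by rw [h1]

/-- `Sp^q_{2g}(ℤ)`: symplectic matrices preserving the quadratic refinement. -/
def Spq (g : ℕ) : Subgroup (GL (HypIdx g) ℤ) := Sp g ⊓ qPreserving g

namespace SpPerfect

open Matrix

variable {g : ℕ}

theorem Jmat_transpose : (Jmat g)ᵀ = -(Jmat g) := by
  simp [Jmat, fromBlocks_transpose, fromBlocks_neg]

theorem Jmat_mul_Jmat : Jmat g * Jmat g = -1 := by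
  simp [Jmat, fromBlocks_multiply]
  rw [← fromBlocks_one, fromBlocks_neg]
  simp

/-- Build a `GL` element from a matrix satisfying the symplectic relation. -/
def toGL (M : Matrix (HypIdx g) (HypIdx g) ℤ) (h : Mᵀ * Jmat g * M = Jmat g) :
    GL (HypIdx g) ℤ :=
  ⟨M, -(Jmat g * Mᵀ * Jmat g),
    by
      rw [mul_eq_one_comm]
      have : Jmat g * (Mᵀ * Jmat g * M) = Jmat g * Jmat g := by rw [h]
      calc -(Jmat g * Mᵀ * Jmat g) * M = -(Jmat g * (Mᵀ * Jmat g * M)) := by noncomm_ring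
        _ = -(Jmat g * Jmat g) := by rw [h]
        _ = 1 := by rw [Jmat_mul_Jmat]; simp,
    by
      have : Jmat g * (Mᵀ * Jmat g * M) = Jmat g * Jmat g := by rw [h]
      calc -(Jmat g * Mᵀ * Jmat g) * M = -(Jmat g * (Mᵀ * Jmat g * M)) := by noncomm_ring
        _ = -(Jmat g * Jmat g) := by rw [h]
        _ = 1 := by rw [Jmat_mul_Jmat]; simp⟩

theorem mem_Sp {A : GL (HypIdx g) ℤ} : A ∈ Sp g ↔ (A.val)ᵀ * Jmat g * A.val = Jmat g :=
  Iff.rfl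

def toSp (M : Matrix (HypIdx g) (HypIdx g) ℤ) (h : Mᵀ * Jmat g * M = Jmat g) :
    ↥(Sp g) := ⟨toGL M h, h⟩

@[simp] theorem toSp_val (M h) : (toSp (g := g) M h).val.val = M := rfl

theorem spEq {x y : ↥(Sp g)} (h : x.val.val = y.val.val) :
    x = y := Subtype.ext (Units.ext h)

@[simp] theorem sp_mul_val (x y : ↥(Sp g)) :
    (x * y).val.val = x.val.val * y.val.val := rfl

end SpPerfect
namespace SpPerfect

open Matrix

variable {g : ℕ}

/-- Upper translation matrix `[[1,B],[0,1]]`. -/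
def TU (B : Matrix (Fin g) (Fin g) ℤ) : Matrix (HypIdx g) (HypIdx g) ℤ :=
  fromBlocks 1 B 0 1

/-- Lower translation matrix `[[1,0],[C,1]]`. -/
def TL (C : Matrix (Fin g) (Fin g) ℤ) : Matrix (HypIdx g) (HypIdx g) ℤ :=
  fromBlocks 1 0 C 1

/-- Block diagonal matrix `[[U,0],[0,V]]`. -/
def MU (U V : Matrix (Fin g) (Fin g) ℤ) : Matrix (HypIdx g) (HypIdx g) ℤ :=
  fromBlocks U 0 0 V

theorem TU_symp {B : Matrix (Fin g) (Fin g) ℤ} (hB : Bᵀ = B) :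
    (TU B)ᵀ * Jmat g * TU B = Jmat g := by
  simp [TU, Jmat, fromBlocks_transpose, fromBlocks_multiply, hB]

theorem TL_symp {C : Matrix (Fin g) (Fin g) ℤ} (hC : Cᵀ = C) :
    (TL C)ᵀ * Jmat g * TL C = Jmat g := by
  simp [TL, Jmat, fromBlocks_transpose, fromBlocks_multiply, hC]

theorem MU_symp {U V : Matrix (Fin g) (Fin g) ℤ} (hUV : Uᵀ * V = 1) :
    (MU U V)ᵀ * Jmat g * MU U V = Jmat g := by
  have hVU : Vᵀ * U = 1 := by
    have := congrArg Matrix.transpose hUV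
    simpa [Matrix.transpose_mul] using this
  simp [MU, Jmat, fromBlocks_transpose, fromBlocks_multiply, hUV, hVU]

theorem J_symp : (Jmat g)ᵀ * Jmat g * Jmat g = Jmat g := by
  rw [Jmat_transpose]
  calc -Jmat g * Jmat g * Jmat g = -(Jmat g * Jmat g) * Jmat g := by noncomm_ring
    _ = Jmat g := by rw [Jmat_mul_Jmat]; simp

def spTU (B : Matrix (Fin g) (Fin g) ℤ) (hB : Bᵀ = B) : ↥(Sp g) := toSp (TU B) (TU_symp hB)
def spTL (C : Matrix (Fin g) (Fin g) ℤ) (hC : Cᵀ = C) : ↥(Sp g) := toSp (TL C) (TL_symp hC)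
def spMU (U V : Matrix (Fin g) (Fin g) ℤ) (hUV : Uᵀ * V = 1) : ↥(Sp g) :=
  toSp (MU U V) (MU_symp hUV)
def spJ : ↥(Sp g) := toSp (Jmat g) J_symp

theorem spTU_mul (B C : Matrix (Fin g) (Fin g) ℤ) (hB : Bᵀ = B) (hC : Cᵀ = C) :
    spTU B hB * spTU C hC = spTU (B + C) (by rw [transpose_add, hB, hC]) := by
  apply spEq
  simp [spTU, TU, fromBlocks_multiply, add_comm]

theorem spTU_zero : spTU (0 : Matrix (Fin g) (Fin g) ℤ) transpose_zero = 1 := by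
  apply spEq
  show (TU 0 : Matrix _ _ ℤ) = _
  simp [TU, fromBlocks_one]

theorem spTU_inv (B : Matrix (Fin g) (Fin g) ℤ) (hB : Bᵀ = B) :
    (spTU B hB)⁻¹ = spTU (-B) (by rw [transpose_neg, hB]) := by
  rw [inv_eq_iff_mul_eq_one, spTU_mul]
  simp only [add_neg_cancel]
  exact spTU_zero

theorem spTL_mul (B C : Matrix (Fin g) (Fin g) ℤ) (hB : Bᵀ = B) (hC : Cᵀ = C) :
    spTL B hB * spTL C hC = spTL (B + C) (by rw [transpose_add, hB, hC]) := by
  apply spEq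
  simp [spTL, TL, fromBlocks_multiply]

theorem spTL_zero : spTL (0 : Matrix (Fin g) (Fin g) ℤ) transpose_zero = 1 := by
  apply spEq
  show (TL 0 : Matrix _ _ ℤ) = _
  simp [TL, fromBlocks_one]

theorem spTL_inv (C : Matrix (Fin g) (Fin g) ℤ) (hC : Cᵀ = C) :
    (spTL C hC)⁻¹ = spTL (-C) (by rw [transpose_neg, hC]) := by
  rw [inv_eq_iff_mul_eq_one, spTL_mul]
  simp only [add_neg_cancel]
  exact spTL_zero

/-- Conjugation relation `M_U T_B = T_{UBUᵀ} M_U`. -/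
theorem spMU_spTU (U V B : Matrix (Fin g) (Fin g) ℤ) (hUV : Uᵀ * V = 1) (hB : Bᵀ = B) :
    spMU U V hUV * spTU B hB =
      spTU (U * B * Uᵀ) (by simp [transpose_mul, transpose_transpose, hB, Matrix.mul_assoc]) *
        spMU U V hUV := by
  apply spEq
  simp only [sp_mul_val, spMU, spTU, toSp_val, MU, TU, fromBlocks_multiply]
  simp [Matrix.mul_assoc, hUV]

/-- Conjugation relation `J T_B = T'_{-B} J`. -/
theorem spJ_spTU (B : Matrix (Fin g) (Fin g) ℤ) (hB : Bᵀ = B) :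
    spJ * spTU B hB = spTL (-B) (by rw [transpose_neg, hB]) * spJ := by
  apply spEq
  simp only [sp_mul_val, spJ, spTU, spTL, toSp_val, TU, TL, Jmat, fromBlocks_multiply]
  simp

end SpPerfect
namespace SpPerfect

open Matrix Subgroup

open scoped commutatorElement

variable {g : ℕ}

theorem stdBasisMatrix_transpose' (i j : Fin g) (c : ℤ) :
    (Matrix.single i j c)ᵀ = Matrix.single j i c := by
  ext a b
  simp [Matrix.single, and_comm]

theorem comm_mem {p t t' : ↥(Sp g)} (h : p * t = t' * p) :
    t' * t⁻¹ ∈ commutator ↥(Sp g) := by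
  have ht' : t' = p * t * p⁻¹ := eq_mul_inv_iff_mul_eq.mpr h.symm
  have : t' * t⁻¹ = ⁅p, t⁆ := by rw [commutatorElement_def, ht']
  rw [this, _root_.commutator_def]
  exact Subgroup.commutator_mem_commutator (mem_top p) (mem_top t)

theorem spTU_congr {B C : Matrix (Fin g) (Fin g) ℤ} (h : B = C) (hB : Bᵀ = B) (hC : Cᵀ = C) :
    spTU B hB = spTU C hC := by subst h; rfl

theorem spTL_congr {B C : Matrix (Fin g) (Fin g) ℤ} (h : B = C) (hB : Bᵀ = B) (hC : Cᵀ = C) :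
    spTL B hB = spTL C hC := by subst h; rfl

/-- The set of symmetric matrices `B` with `T_B` in the commutator subgroup. -/
def symAdd (g : ℕ) : AddSubgroup (Matrix (Fin g) (Fin g) ℤ) where
  carrier := {B | ∃ h : Bᵀ = B, spTU B h ∈ commutator ↥(Sp g)}
  zero_mem' := ⟨transpose_zero, by rw [spTU_zero]; exact one_mem _⟩
  add_mem' := by
    rintro a b ⟨ha, hma⟩ ⟨hb, hmb⟩
    refine ⟨by rw [transpose_add, ha, hb], ?_⟩
    have := mul_mem hma hmb
    rwa [spTU_mul] at this
  neg_mem' := by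
    rintro a ⟨ha, hma⟩
    refine ⟨by rw [transpose_neg, ha], ?_⟩
    have := inv_mem hma
    rwa [spTU_inv] at this

/-- `U B Uᵀ - B` always lies in `symAdd`. -/
theorem conj_sub_mem {U V B : Matrix (Fin g) (Fin g) ℤ} (hUV : Uᵀ * V = 1) (hB : Bᵀ = B) :
    U * B * Uᵀ - B ∈ symAdd g := by
  have h := spMU_spTU U V B hUV hB
  have hmem := comm_mem h
  rw [spTU_inv] at hmem
  rw [spTU_mul] at hmem
  have heq : U * B * Uᵀ + -B = U * B * Uᵀ - B := by abel
  have hsym : (U * B * Uᵀ - B)ᵀ = U * B * Uᵀ - B := by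
    simp [transpose_sub, transpose_mul, transpose_transpose, hB, Matrix.mul_assoc]
  refine ⟨hsym, ?_⟩
  rwa [spTU_congr heq _ hsym] at hmem

theorem elemUV (i j : Fin g) (hij : i ≠ j) :
    (1 + Matrix.single i j (1:ℤ))ᵀ * (1 - Matrix.single j i (1:ℤ)) = 1 := by
  simp only [transpose_add, transpose_one, stdBasisMatrix_transpose', add_mul, mul_sub,
    one_mul, mul_one]
  simp [single_mul_single_of_ne, hij]

theorem gen2_mem (i k : Fin g) (j : Fin g) (hij : i ≠ j) (hjk : j ≠ k) (hik : i ≠ k)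
    (b : ℤ) : Matrix.single i k b + Matrix.single k i b ∈ symAdd g := by
  have hB : (Matrix.single j k b + Matrix.single k j b)ᵀ
      = Matrix.single j k b + Matrix.single k j b := by
    rw [transpose_add, stdBasisMatrix_transpose', stdBasisMatrix_transpose', add_comm]
  have h := conj_sub_mem (elemUV i j hij) hB
  have hcalc : (1 + Matrix.single i j (1:ℤ)) * (Matrix.single j k b + Matrix.single k j b) *
      (1 + Matrix.single i j (1:ℤ))ᵀ - (Matrix.single j k b + Matrix.single k j b)
      = Matrix.single i k b + Matrix.single k i b := by
    simp only [transpose_add, transpose_one, stdBasisMatrix_transpose', add_mul, mul_add,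
      one_mul, mul_one]
    simp [single_mul_single_same, single_mul_single_of_ne, hij, hjk, hik,
      hij.symm, hjk.symm, hik.symm, mul_add, add_mul]
    abel
  rwa [hcalc] at h

theorem gen1_mem (i j : Fin g) (hij : i ≠ j) (b : ℤ) :
    Matrix.single i j b + Matrix.single j i b + Matrix.single i i b ∈ symAdd g := by
  have hB : (Matrix.single j j b)ᵀ = Matrix.single j j b := stdBasisMatrix_transpose' j j b
  have h := conj_sub_mem (elemUV i j hij) hB
  have hcalc : (1 + Matrix.single i j (1:ℤ)) * Matrix.single j j b *
      (1 + Matrix.single i j (1:ℤ))ᵀ - Matrix.single j j b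
      = Matrix.single i j b + Matrix.single j i b + Matrix.single i i b := by
    simp only [transpose_add, transpose_one, stdBasisMatrix_transpose', add_mul, mul_add,
      one_mul, mul_one]
    simp [single_mul_single_same, single_mul_single_of_ne, hij, hij.symm, mul_add, add_mul]
    abel
  rwa [hcalc] at h

end SpPerfect
namespace SpPerfect

open Matrix Subgroup

variable {g : ℕ}

theorem exists_third (hg : 3 ≤ g) (i k : Fin g) : ∃ j : Fin g, j ≠ i ∧ j ≠ k := by
  by_contra h
  push_neg at h
  have hsub : (Finset.univ : Finset (Fin g)) ⊆ {i, k} := by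
    intro j _
    rcases Classical.em (j = i) with rfl | hji
    · simp
    · simp [h j hji]
  have := Finset.card_le_card hsub
  simp only [Finset.card_univ, Fintype.card_fin] at this
  have h2 : ({i, k} : Finset (Fin g)).card ≤ 2 :=
    le_trans (Finset.card_insert_le _ _) (by simp)
  omega

theorem diag_mem (hg : 3 ≤ g) (i : Fin g) (b : ℤ) :
    Matrix.single i i b ∈ symAdd g := by
  obtain ⟨j, hji, -⟩ := exists_third hg i i
  obtain ⟨l, hli, hlj⟩ := exists_third hg i j
  have h1 := gen1_mem i j (Ne.symm hji) b
  have h2 := gen2_mem i j l (Ne.symm hli) hlj (Ne.symm hji) b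
  have := AddSubgroup.sub_mem _ h1 h2
  simpa using this

theorem pair_mem (hg : 3 ≤ g) (i j : Fin g) (b : ℤ) :
    Matrix.single i j b + Matrix.single j i b ∈ symAdd g := by
  rcases Classical.em (i = j) with rfl | hij
  · have : Matrix.single i i b + Matrix.single i i b = Matrix.single i i (b + b) :=
      (single_add i i b b).symm
    rw [this]
    exact diag_mem hg i (b + b)
  · obtain ⟨l, hli, hlj⟩ := exists_third hg i j
    exact gen2_mem i j l (Ne.symm hli) hlj hij b

theorem sym_mem (hg : 3 ≤ g) (B : Matrix (Fin g) (Fin g) ℤ) (hB : Bᵀ = B) :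
    B ∈ symAdd g := by
  classical
  set D : Matrix (Fin g) (Fin g) ℤ := Matrix.diagonal fun i => B i i with hDdef
  set Nu : Matrix (Fin g) (Fin g) ℤ := Matrix.of fun i j => if i < j then B i j else 0
    with hNdef
  have hD : D ∈ symAdd g := by
    have hDeq : D = ∑ i, Matrix.single i i (B i i) := by
      ext a b
      simp only [Matrix.sum_apply, Matrix.single, Matrix.of_apply, ite_and]
      rw [Finset.sum_ite_eq']
      simp [hDdef, Matrix.diagonal_apply]
    rw [hDeq]
    exact AddSubgroup.sum_mem _ fun i _ => diag_mem hg i (B i i)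
  have hNu : Nu + Nuᵀ ∈ symAdd g := by
    have hNeq : Nu + Nuᵀ
        = ∑ i, ∑ j, (Matrix.single i j (Nu i j) + Matrix.single j i (Nu i j)) := by
      have h1 : Nu = ∑ i, ∑ j, Matrix.single i j (Nu i j) := matrix_eq_sum_single Nu
      have h2 : Nuᵀ = ∑ i, ∑ j, Matrix.single j i (Nu i j) := by
        conv_lhs => rw [h1]
        rw [Matrix.transpose_sum]
        refine Finset.sum_congr rfl fun i _ => ?_
        rw [Matrix.transpose_sum]
        exact Finset.sum_congr rfl fun j _ => stdBasisMatrix_transpose' i j (Nu i j)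
      calc Nu + Nuᵀ = (∑ i, ∑ j, Matrix.single i j (Nu i j))
            + ∑ i, ∑ j, Matrix.single j i (Nu i j) := by rw [← h1, ← h2]
        _ = _ := by
            rw [← Finset.sum_add_distrib]
            exact Finset.sum_congr rfl fun i _ => by rw [← Finset.sum_add_distrib]
    rw [hNeq]
    exact AddSubgroup.sum_mem _ fun i _ =>
      AddSubgroup.sum_mem _ fun j _ => pair_mem hg i j (Nu i j)
  have hBeq : B = D + (Nu + Nuᵀ) := by
    ext a b
    have hsym : B b a = B a b := by
      conv_lhs => rw [← hB]
      rfl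
    simp only [Matrix.add_apply, hDdef, hNdef, Matrix.diagonal_apply, Matrix.of_apply,
      Matrix.transpose_apply]
    rcases lt_trichotomy a b with h | h | h
    · simp [h, ne_of_lt h, not_lt.mpr (le_of_lt h)]
    · subst h
      simp [lt_irrefl]
    · simp [h, not_lt.mpr (le_of_lt h), (ne_of_lt h).symm, hsym]
  rw [hBeq]
  exact AddSubgroup.add_mem _ hD hNu

end SpPerfect
namespace SpPerfect

open Matrix Subgroup

variable {g : ℕ}

theorem spTU_mem_commutator (hg : 3 ≤ g) (B : Matrix (Fin g) (Fin g) ℤ) (hB : Bᵀ = B) :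
    spTU B hB ∈ commutator ↥(Sp g) := by
  obtain ⟨h', m⟩ := sym_mem hg B hB
  exact m

theorem spTL_mem_commutator (hg : 3 ≤ g) (C : Matrix (Fin g) (Fin g) ℤ) (hC : Cᵀ = C) :
    spTL C hC ∈ commutator ↥(Sp g) := by
  have hC' : (-C)ᵀ = -C := by rw [transpose_neg, hC]
  have h := spJ_spTU (-C) hC'
  rw [spTL_congr (neg_neg C) _ hC] at h
  have heq : spTL C hC = spJ * spTU (-C) hC' * spJ⁻¹ :=
    eq_mul_inv_iff_mul_eq.mpr h.symm
  rw [heq]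
  exact Subgroup.Normal.conj_mem inferInstance _ (spTU_mem_commutator hg _ _) spJ

end SpPerfect
namespace SpPerfect

open Matrix Subgroup

variable {g : ℕ}

/-- Action of a symplectic group element on column vectors. -/
def mAct (x : ↥(Sp g)) (v : HypIdx g → ℤ) : HypIdx g → ℤ := x.val.val.mulVec v

theorem mAct_mul (x y : ↥(Sp g)) (v : HypIdx g → ℤ) :
    mAct (x * y) v = mAct x (mAct y v) := by
  simp [mAct, Matrix.mulVec_mulVec]

@[simp] theorem mAct_one (v : HypIdx g → ℤ) : mAct (1 : ↥(Sp g)) v = v := by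
  have : ((1 : ↥(Sp g)).val.val : Matrix (HypIdx g) (HypIdx g) ℤ) = 1 := rfl
  simp [mAct, this]

theorem mAct_inv (x : ↥(Sp g)) {v w : HypIdx g → ℤ} (h : mAct x v = w) :
    mAct x⁻¹ w = v := by
  rw [← h, ← mAct_mul, inv_mul_cancel, mAct_one]

/-- The generating set: all upper and lower translations. -/
def genS (g : ℕ) : Set ↥(Sp g) :=
  {x | (∃ B hB, x = spTU B hB) ∨ (∃ C hC, x = spTL C hC)}

/-- The subgroup generated by the translations. -/
def Hgen (g : ℕ) : Subgroup ↥(Sp g) := Subgroup.closure (genS g)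

theorem spTU_mem_Hgen (B hB) : spTU (g := g) B hB ∈ Hgen g :=
  Subgroup.subset_closure (Or.inl ⟨B, hB, rfl⟩)

theorem spTL_mem_Hgen (C hC) : spTL (g := g) C hC ∈ Hgen g :=
  Subgroup.subset_closure (Or.inr ⟨C, hC, rfl⟩)

/-! Elementary operations -/

theorem stdBasis_diag_symm (i : Fin g) (c : ℤ) :
    (Matrix.single i i c)ᵀ = Matrix.single i i c := stdBasisMatrix_transpose' i i c

theorem stdBasis_pair_symm (i j : Fin g) (c : ℤ) :
    (Matrix.single i j c + Matrix.single j i c)ᵀ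
      = Matrix.single i j c + Matrix.single j i c := by
  rw [transpose_add, stdBasisMatrix_transpose', stdBasisMatrix_transpose', add_comm]

def uDiag (i : Fin g) (c : ℤ) : ↥(Sp g) := spTU _ (stdBasis_diag_symm i c)
def lDiag (i : Fin g) (c : ℤ) : ↥(Sp g) := spTL _ (stdBasis_diag_symm i c)
def uMix (i j : Fin g) (c : ℤ) : ↥(Sp g) := spTU _ (stdBasis_pair_symm i j c)

theorem uDiag_mem (i : Fin g) (c : ℤ) : uDiag i c ∈ Hgen g := spTU_mem_Hgen _ _
theorem lDiag_mem (i : Fin g) (c : ℤ) : lDiag i c ∈ Hgen g := spTL_mem_Hgen _ _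
theorem uMix_mem (i j : Fin g) (c : ℤ) : uMix i j c ∈ Hgen g := spTU_mem_Hgen _ _

theorem aOp_hUV {i j : Fin g} (hij : i ≠ j) (c : ℤ) :
    (1 + Matrix.single i j c)ᵀ * (1 - Matrix.single j i c) = 1 := by
  simp only [transpose_add, transpose_one, stdBasisMatrix_transpose', add_mul, mul_sub,
    one_mul, mul_one]
  simp [single_mul_single_of_ne, hij]

/-- The `GL_g`-elementary operation `[[1+cE_ij, 0],[0, 1-cE_ji]]`. -/
def aOp (i j : Fin g) (hij : i ≠ j) (c : ℤ) : ↥(Sp g) :=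
  spMU (1 + Matrix.single i j c) (1 - Matrix.single j i c) (aOp_hUV hij c)

/-! Action formulas -/

theorem uDiag_act (i : Fin g) (c : ℤ) (v : HypIdx g → ℤ) :
    mAct (uDiag i c) v
      = Function.update v (Sum.inl i) (v (Sum.inl i) + c * v (Sum.inr i)) := by
  funext a
  simp only [mAct, uDiag, spTU, toSp_val, TU, fromBlocks_mulVec, single_mulVec,
    Matrix.one_mulVec, Matrix.zero_mulVec, zero_add]
  rcases a with a | a
  · simp only [Sum.elim_inl, Pi.add_apply, Function.comp_apply, Function.update_apply]
    rcases Classical.em (a = i) with rfl | hai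
    · simp
    · simp [hai, Sum.inl.injEq]
  · simp only [Sum.elim_inr, Function.comp_apply, Function.update_apply]
    simp

theorem lDiag_act (i : Fin g) (c : ℤ) (v : HypIdx g → ℤ) :
    mAct (lDiag i c) v
      = Function.update v (Sum.inr i) (v (Sum.inr i) + c * v (Sum.inl i)) := by
  funext a
  simp only [mAct, lDiag, spTL, toSp_val, TL, fromBlocks_mulVec, single_mulVec,
    Matrix.one_mulVec, Matrix.zero_mulVec, zero_add, add_zero]
  rcases a with a | a
  · simp only [Sum.elim_inl, Function.comp_apply, Function.update_apply]
    simp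
  · simp only [Sum.elim_inr, Pi.add_apply, Function.comp_apply, Function.update_apply]
    rcases Classical.em (a = i) with rfl | hai
    · simp [add_comm]
    · simp [hai, Sum.inr.injEq]

theorem uMix_act {i j : Fin g} (hij : i ≠ j) (c : ℤ) (v : HypIdx g → ℤ) :
    mAct (uMix i j c) v
      = Function.update (Function.update v (Sum.inl i) (v (Sum.inl i) + c * v (Sum.inr j)))
          (Sum.inl j) (v (Sum.inl j) + c * v (Sum.inr i)) := by
  funext a
  simp only [mAct, uMix, spTU, toSp_val, TU, fromBlocks_mulVec, Matrix.add_mulVec,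
    single_mulVec, Matrix.one_mulVec, Matrix.zero_mulVec, zero_add]
  rcases a with a | a
  · simp only [Sum.elim_inl, Pi.add_apply, Function.comp_apply, Function.update_apply]
    rcases Classical.em (a = j) with rfl | haj
    · simp [hij.symm, Function.update_apply]
    · rcases Classical.em (a = i) with rfl | hai
      · simp [hij, haj, Function.update_apply]
      · simp [hai, haj, Sum.inl.injEq, Function.update_apply]
  · simp only [Sum.elim_inr, Function.comp_apply, Function.update_apply]
    simp

theorem aOp_act {i j : Fin g} (hij : i ≠ j) (c : ℤ) (v : HypIdx g → ℤ) :
    mAct (aOp i j hij c) v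
      = Function.update (Function.update v (Sum.inl i) (v (Sum.inl i) + c * v (Sum.inl j)))
          (Sum.inr j) (v (Sum.inr j) - c * v (Sum.inr i)) := by
  funext a
  simp only [mAct, aOp, spMU, toSp_val, MU, fromBlocks_mulVec, Matrix.add_mulVec,
    Matrix.sub_mulVec, single_mulVec, Matrix.one_mulVec, Matrix.zero_mulVec,
    zero_add, add_zero]
  rcases a with a | a
  · simp only [Sum.elim_inl, Pi.add_apply, Function.comp_apply, Function.update_apply]
    rcases Classical.em (a = i) with rfl | hai
    · simp [hij, Function.update_apply]
    · simp [hai, Sum.inl.injEq, Function.update_apply]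
  · simp only [Sum.elim_inr, Pi.sub_apply, Function.comp_apply, Function.update_apply]
    rcases Classical.em (a = j) with rfl | haj
    · simp
    · simp [haj, Sum.inr.injEq]

end SpPerfect
namespace SpPerfect

open Matrix Subgroup

variable {g : ℕ}

/-- `w(S) = T_S T'_{-S⁻¹} T_S`. -/
def wG (S S' : Matrix (Fin g) (Fin g) ℤ) (hS : Sᵀ = S) (hS' : S'ᵀ = S')
    (_h1 : S * S' = 1) : ↥(Sp g) :=
  spTU S hS * spTL (-S') (by rw [transpose_neg, hS']) * spTU S hS

theorem wG_mem (S S' hS hS' h1) : wG (g := g) S S' hS hS' h1 ∈ Hgen g :=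
  mul_mem (mul_mem (spTU_mem_Hgen _ _) (spTL_mem_Hgen _ _)) (spTU_mem_Hgen _ _)

theorem wG_val (S S' hS hS' h1) (h2 : S' * S = 1) :
    (wG (g := g) S S' hS hS' h1).val.val = fromBlocks 0 S (-S') 0 := by
  simp only [wG, sp_mul_val, spTU, spTL, toSp_val, TU, TL, fromBlocks_multiply]
  simp [h1, h2, mul_neg, neg_mul]

/-- The transposition matrix swapping `i` and `j`. -/
def swapM (i j : Fin g) : Matrix (Fin g) (Fin g) ℤ :=
  1 - Matrix.single i i 1 - Matrix.single j j 1 + Matrix.single i j 1 + Matrix.single j i 1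

theorem swapM_symm (i j : Fin g) : (swapM i j)ᵀ = swapM i j := by
  simp only [swapM, transpose_add, transpose_sub, transpose_one, stdBasisMatrix_transpose']
  abel

theorem swapM_mul_self {i j : Fin g} (hij : i ≠ j) : swapM i j * swapM i j = 1 := by
  simp only [swapM, add_mul, sub_mul, mul_add, mul_sub, mul_one, one_mul]
  simp [single_mul_single_same, single_mul_single_of_ne, hij, hij.symm, mul_add, mul_sub,
    add_mul, sub_mul]

theorem swapM_S1 {i j : Fin g} (hij : i ≠ j) (c : ℤ) :
    (1 + Matrix.single i j c) * swapM i j = swapM i j + Matrix.single i i c := by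
  simp only [swapM, add_mul, one_mul, mul_add, mul_sub, mul_one]
  simp [single_mul_single_same, single_mul_single_of_ne, hij, hij.symm, mul_add, mul_sub]
  abel

theorem swapM_S1' {i j : Fin g} (hij : i ≠ j) (c : ℤ) :
    (1 - Matrix.single j i c) * swapM i j = swapM i j - Matrix.single j j c := by
  simp only [swapM, sub_mul, one_mul, mul_add, mul_sub, mul_one]
  simp [single_mul_single_same, single_mul_single_of_ne, hij, hij.symm, mul_add, mul_sub]
  abel

theorem S1_symm {i j : Fin g} (c : ℤ) :
    (swapM i j + Matrix.single i i c)ᵀ = swapM i j + Matrix.single i i c := by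
  rw [transpose_add, swapM_symm, stdBasisMatrix_transpose']

theorem S1'_symm {i j : Fin g} (c : ℤ) :
    (swapM i j - Matrix.single j j c)ᵀ = swapM i j - Matrix.single j j c := by
  rw [transpose_sub, swapM_symm, stdBasisMatrix_transpose']

theorem S1_mul_S1' {i j : Fin g} (hij : i ≠ j) (c : ℤ) :
    (swapM i j + Matrix.single i i c) * (swapM i j - Matrix.single j j c) = 1 := by
  rw [add_mul, mul_sub, mul_sub, swapM_mul_self hij]
  have h1 : swapM i j * Matrix.single j j c = Matrix.single i j c := by
    simp only [swapM, add_mul, sub_mul, one_mul]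
    simp [single_mul_single_same, single_mul_single_of_ne, hij, hij.symm]
  have h2 : Matrix.single i i c * swapM i j = Matrix.single i j c := by
    simp only [swapM, mul_add, mul_sub, mul_one]
    simp [single_mul_single_same, single_mul_single_of_ne, hij, hij.symm]
  rw [h1, h2]
  simp [single_mul_single_of_ne, hij, hij.symm]

theorem S1'_mul_S1 {i j : Fin g} (hij : i ≠ j) (c : ℤ) :
    (swapM i j - Matrix.single j j c) * (swapM i j + Matrix.single i i c) = 1 := by
  rw [sub_mul, mul_add, mul_add, swapM_mul_self hij]
  have h1 : swapM i j * Matrix.single i i c = Matrix.single j i c := by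
    simp only [swapM, add_mul, sub_mul, one_mul]
    simp [single_mul_single_same, single_mul_single_of_ne, hij, hij.symm]
  have h2 : Matrix.single j j c * swapM i j = Matrix.single j i c := by
    simp only [swapM, mul_add, mul_sub, mul_one]
    simp [single_mul_single_same, single_mul_single_of_ne, hij, hij.symm]
  rw [h1, h2]
  simp [single_mul_single_of_ne, hij, hij.symm]

theorem aOp_mem_Hgen {i j : Fin g} (hij : i ≠ j) (c : ℤ) :
    aOp i j hij c ∈ Hgen g := by
  have hw2 : wG (swapM i j) (swapM i j) (swapM_symm i j) (swapM_symm i j)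
      (swapM_mul_self hij) ∈ Hgen g := wG_mem _ _ _ _ _
  have hw1 : wG (swapM i j + Matrix.single i i c) (swapM i j - Matrix.single j j c)
      (S1_symm c) (S1'_symm c) (S1_mul_S1' hij c) ∈ Hgen g := wG_mem _ _ _ _ _
  have key : aOp i j hij c
      * wG (swapM i j) (swapM i j) (swapM_symm i j) (swapM_symm i j) (swapM_mul_self hij)
      = wG (swapM i j + Matrix.single i i c) (swapM i j - Matrix.single j j c)
        (S1_symm c) (S1'_symm c) (S1_mul_S1' hij c) := by
    apply spEq
    rw [sp_mul_val, wG_val _ _ _ _ _ (swapM_mul_self hij),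
      wG_val _ _ _ _ _ (S1'_mul_S1 hij c)]
    show MU _ _ * _ = _
    simp only [MU, fromBlocks_multiply, Matrix.mul_zero, Matrix.zero_mul, add_zero, zero_add,
      Matrix.mul_neg, neg_zero]
    rw [swapM_S1 hij c, swapM_S1' hij c]
  have : aOp i j hij c
      = wG (swapM i j + Matrix.single i i c) (swapM i j - Matrix.single j j c)
        (S1_symm c) (S1'_symm c) (S1_mul_S1' hij c)
      * (wG (swapM i j) (swapM i j) (swapM_symm i j) (swapM_symm i j)
          (swapM_mul_self hij))⁻¹ := by
    rw [← key]; group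
  rw [this]
  exact mul_mem hw1 (inv_mem hw2)

end SpPerfect
namespace SpPerfect

open Matrix Subgroup

variable {g : ℕ}

def eb (i : Fin g) : HypIdx g → ℤ := Pi.single (Sum.inl i) 1
def fb (i : Fin g) : HypIdx g → ℤ := Pi.single (Sum.inr i) 1

/-- Stabilizer of a vector. -/
def StabV (v : HypIdx g → ℤ) : Subgroup ↥(Sp g) where
  carrier := {x | mAct x v = v}
  one_mem' := mAct_one v
  mul_mem' := by
    intro a b ha hb
    show mAct (a * b) v = v
    rw [mAct_mul]
    show mAct a (mAct b v) = v
    rw [hb, ha]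
  inv_mem' := by
    intro a ha
    exact mAct_inv a ha

theorem mem_StabV {x : ↥(Sp g)} {v} : x ∈ StabV v ↔ mAct x v = v := Iff.rfl

/-- Subgroup fixing the first `k` hyperbolic pairs. -/
def Stab (g : ℕ) (k : ℕ) : Subgroup ↥(Sp g) where
  carrier := {x | ∀ i : Fin g, (i : ℕ) < k → x ∈ StabV (eb i) ∧ x ∈ StabV (fb i)}
  one_mem' := fun i _ => ⟨one_mem _, one_mem _⟩
  mul_mem' := by
    intro a b ha hb i hi
    exact ⟨mul_mem (ha i hi).1 (hb i hi).1, mul_mem (ha i hi).2 (hb i hi).2⟩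
  inv_mem' := by
    intro a ha i hi
    exact ⟨inv_mem (ha i hi).1, inv_mem (ha i hi).2⟩

theorem mem_Stab {x : ↥(Sp g)} {k : ℕ} :
    x ∈ Stab g k ↔ ∀ i : Fin g, (i : ℕ) < k → x ∈ StabV (eb i) ∧ x ∈ StabV (fb i) :=
  Iff.rfl

/-! Fixing lemmas for the elementary operations -/

theorem uDiag_fix {v : HypIdx g → ℤ} (i : Fin g) (c : ℤ) (h : v (Sum.inr i) = 0) :
    uDiag i c ∈ StabV v := by
  rw [mem_StabV, uDiag_act, h]
  simp

theorem lDiag_fix {v : HypIdx g → ℤ} (i : Fin g) (c : ℤ) (h : v (Sum.inl i) = 0) :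
    lDiag i c ∈ StabV v := by
  rw [mem_StabV, lDiag_act, h]
  simp

theorem uMix_fix {v : HypIdx g → ℤ} {i j : Fin g} (hij : i ≠ j) (c : ℤ)
    (h1 : v (Sum.inr i) = 0) (h2 : v (Sum.inr j) = 0) : uMix i j c ∈ StabV v := by
  rw [mem_StabV, uMix_act hij, h1, h2]
  simp

theorem aOp_fix {v : HypIdx g → ℤ} {i j : Fin g} (hij : i ≠ j) (c : ℤ)
    (h1 : v (Sum.inl j) = 0) (h2 : v (Sum.inr i) = 0) : aOp i j hij c ∈ StabV v := by
  rw [mem_StabV, aOp_act hij, h1, h2]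
  simp

theorem eb_apply_inl (l i : Fin g) : eb l (Sum.inl i) = if i = l then 1 else 0 := by
  simp [eb, Pi.single_apply]

@[simp] theorem eb_apply_inr (l i : Fin g) : eb l (Sum.inr i) = 0 := by
  simp [eb, Pi.single_apply]

@[simp] theorem fb_apply_inl (l i : Fin g) : fb l (Sum.inl i) = 0 := by
  simp [fb, Pi.single_apply]

theorem fb_apply_inr (l i : Fin g) : fb l (Sum.inr i) = if i = l then 1 else 0 := by
  simp [fb, Pi.single_apply]

theorem uDiag_mem_Stab (i : Fin g) (c : ℤ) {k : ℕ} (hk : k ≤ (i : ℕ)) :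
    uDiag i c ∈ Stab g k := by
  intro l hl
  have hne : i ≠ l := fun h => by subst h; omega
  exact ⟨uDiag_fix i c (by simp),
    uDiag_fix i c (by rw [fb_apply_inr]; simp [hne])⟩

theorem lDiag_mem_Stab (i : Fin g) (c : ℤ) {k : ℕ} (hk : k ≤ (i : ℕ)) :
    lDiag i c ∈ Stab g k := by
  intro l hl
  have hne : i ≠ l := fun h => by subst h; omega
  exact ⟨lDiag_fix i c (by rw [eb_apply_inl]; simp [hne]),
    lDiag_fix i c (by simp)⟩

theorem uMix_mem_Stab {i j : Fin g} (hij : i ≠ j) (c : ℤ) {k : ℕ}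
    (hki : k ≤ (i : ℕ)) (hkj : k ≤ (j : ℕ)) : uMix i j c ∈ Stab g k := by
  intro l hl
  have hnei : i ≠ l := fun h => by subst h; omega
  have hnej : j ≠ l := fun h => by subst h; omega
  exact ⟨uMix_fix hij c (by simp) (by simp),
    uMix_fix hij c (by rw [fb_apply_inr]; simp [hnei]) (by rw [fb_apply_inr]; simp [hnej])⟩

theorem aOp_mem_Stab {i j : Fin g} (hij : i ≠ j) (c : ℤ) {k : ℕ}
    (hki : k ≤ (i : ℕ)) (hkj : k ≤ (j : ℕ)) : aOp i j hij c ∈ Stab g k := by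
  intro l hl
  have hnei : i ≠ l := fun h => by subst h; omega
  have hnej : j ≠ l := fun h => by subst h; omega
  exact ⟨aOp_fix hij c (by rw [eb_apply_inl]; simp [hnej]) (by simp),
    aOp_fix hij c (by simp) (by rw [fb_apply_inr]; simp [hnei])⟩

/-! The Euclid lemma -/

theorem emod_abs_lt (a b : ℤ) (hb : b ≠ 0) : a % b < |b| := by
  rcases lt_or_gt_of_ne hb with h | h
  · have h2 : a % b = a % (-b) := by
      rw [← Int.emod_neg]
    rw [h2, abs_of_neg h]
    exact Int.emod_lt_of_pos a (by omega)
  · rw [abs_of_pos h]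
    exact Int.emod_lt_of_pos a h

theorem updates_eq {v w : HypIdx g → ℤ} (p q : HypIdx g)
    (h : ∀ a, a ≠ p → a ≠ q → v a = w a) (d : ℤ) :
    Function.update (Function.update v p d) q 0
      = Function.update (Function.update w p d) q 0 := by
  funext a
  rcases Classical.em (a = q) with rfl | haq
  · simp
  · rcases Classical.em (a = p) with rfl | hap
    · simp [Function.update_apply, haq]
    · simp [Function.update_apply, haq, hap, h a hap haq]

theorem euclid_pair (K : Subgroup ↥(Sp g)) (p q : HypIdx g) (hpq : p ≠ q)
    (P : (HypIdx g → ℤ) → Prop)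
    (h1 : ∀ (c : ℤ) (v : HypIdx g → ℤ), P v → ∃ E ∈ K,
        mAct E v = Function.update v p (v p + c * v q)
          ∧ P (Function.update v p (v p + c * v q)))
    (h2 : ∀ (c : ℤ) (v : HypIdx g → ℤ), P v → ∃ E ∈ K,
        mAct E v = Function.update v q (v q + c * v p)
          ∧ P (Function.update v q (v q + c * v p))) :
    ∀ (N : ℕ) (v : HypIdx g → ℤ), (v q).natAbs ≤ N → P v →
      ∃ E ∈ K, ∃ d : ℤ, mAct E v = Function.update (Function.update v p d) q 0
        ∧ P (Function.update (Function.update v p d) q 0) := by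
  intro N
  induction N with
  | zero =>
    intro v hN hP
    have hq : v q = 0 := by
      have := Int.natAbs_eq_zero.mp (Nat.le_zero.mp hN)
      exact this
    refine ⟨1, one_mem _, v p, ?_, ?_⟩
    · rw [mAct_one, Function.update_eq_self, ← hq, Function.update_eq_self]
    · rw [Function.update_eq_self, ← hq, Function.update_eq_self]; exact hP
  | succ N ih =>
    intro v hN hP
    by_cases hq : v q = 0
    · refine ⟨1, one_mem _, v p, ?_, ?_⟩
      · rw [mAct_one, Function.update_eq_self, ← hq, Function.update_eq_self]
      · rw [Function.update_eq_self, ← hq, Function.update_eq_self]; exact hP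
    · -- Step A : make the `p` coordinate equal to `v p % v q`
      obtain ⟨E₁, hE₁K, hE₁act, hP₁⟩ := h1 (-(v p / v q)) v hP
      set v₁ := Function.update v p (v p + -(v p / v q) * v q) with hv₁def
      have hv₁p : v₁ p = v p % v q := by
        rw [hv₁def, Function.update_self, Int.emod_def]
        ring
      have hv₁q : v₁ q = v q := by
        rw [hv₁def, Function.update_of_ne hpq.symm]
      have hv₁other : ∀ a, a ≠ p → a ≠ q → v₁ a = v a := by
        intro a hap _
        rw [hv₁def, Function.update_of_ne hap]
      by_cases hr : v₁ p = 0
      · -- gcd is |v q| : two more steps finish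
        obtain ⟨E₂, hE₂K, hE₂act, hP₂⟩ := h1 1 v₁ hP₁
        set v₂ := Function.update v₁ p (v₁ p + 1 * v₁ q) with hv₂def
        have hv₂p : v₂ p = v q := by
          rw [hv₂def, Function.update_self, hr, hv₁q]; ring
        have hv₂q : v₂ q = v q := by
          rw [hv₂def, Function.update_of_ne hpq.symm, hv₁q]
        obtain ⟨E₃, hE₃K, hE₃act, hP₃⟩ := h2 (-1) v₂ hP₂
        set v₃ := Function.update v₂ q (v₂ q + -1 * v₂ p) with hv₃def
        have hv₃ : v₃ = Function.update (Function.update v p (v q)) q 0 := by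
          funext a
          rcases Classical.em (a = q) with rfl | haq
          · rw [hv₃def, hv₂q, hv₂p, Function.update_self, Function.update_self]
            ring
          · rcases Classical.em (a = p) with rfl | hap
            · rw [hv₃def, Function.update_of_ne haq, hv₂p,
                Function.update_of_ne haq, Function.update_self]
            · rw [hv₃def, Function.update_of_ne haq, hv₂def, Function.update_of_ne hap,
                hv₁other a hap haq, Function.update_of_ne haq, Function.update_of_ne hap]
        refine ⟨E₃ * E₂ * E₁, mul_mem (mul_mem hE₃K hE₂K) hE₁K, v q, ?_, ?_⟩
        · rw [mAct_mul, mAct_mul, hE₁act, hE₂act, hE₃act, hv₃]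
        · rw [← hv₃]; exact hP₃
      · -- recurse
        have hrpos : 0 < v₁ p := by
          rw [hv₁p] at hr ⊢
          have := Int.emod_nonneg (v p) hq
          omega
        obtain ⟨E₂, hE₂K, hE₂act, hP₂⟩ := h2 (-(v₁ q / v₁ p)) v₁ hP₁
        set v₂ := Function.update v₁ q (v₁ q + -(v₁ q / v₁ p) * v₁ p) with hv₂def
        have hv₂q : v₂ q = v₁ q % v₁ p := by
          rw [hv₂def, Function.update_self, Int.emod_def]
          ring
        have hv₂le : (v₂ q).natAbs ≤ N := by
          have hnn : 0 ≤ v₂ q := by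
            rw [hv₂q]; exact Int.emod_nonneg _ (ne_of_gt hrpos)
          have hlt : v₂ q < v₁ p := by
            rw [hv₂q]; exact Int.emod_lt_of_pos _ hrpos
          have hlt2 : v₁ p < |v q| := by
            rw [hv₁p]; exact emod_abs_lt _ _ hq
          have h4 : v₂ q < |v q| := lt_trans hlt hlt2
          rw [Int.abs_eq_natAbs] at h4
          omega
        obtain ⟨E₃, hE₃K, ⟨d, hE₃act, hP₃⟩⟩ := ih v₂ hv₂le hP₂
        refine ⟨E₃ * E₂ * E₁, mul_mem (mul_mem hE₃K hE₂K) hE₁K, d, ?_, ?_⟩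
        · rw [mAct_mul, mAct_mul, hE₁act, hE₂act, hE₃act]
          apply updates_eq
          intro a hap haq
          rw [hv₂def, Function.update_of_ne haq, hv₁other a hap haq]
        · have heq : Function.update (Function.update v₂ p d) q 0
              = Function.update (Function.update v p d) q 0 := by
            apply updates_eq
            intro a hap haq
            rw [hv₂def, Function.update_of_ne haq, hv₁other a hap haq]
          rw [← heq]; exact hP₃

end SpPerfect
namespace SpPerfect

open Matrix Subgroup Finset

variable {g : ℕ}

theorem phaseA (k : ℕ) (t : Finset (Fin g)) (ht : ∀ i ∈ t, k ≤ (i : ℕ))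
    (v : HypIdx g → ℤ) :
    ∃ E ∈ Hgen g ⊓ Stab g k,
      (∀ i ∈ t, mAct E v (Sum.inr i) = 0) ∧
      (∀ a : HypIdx g, (∀ i ∈ t, a ≠ Sum.inl i ∧ a ≠ Sum.inr i) → mAct E v a = v a) := by
  induction t using Finset.induction_on generalizing v with
  | empty =>
    exact ⟨1, one_mem _, fun l hl => absurd hl (Finset.notMem_empty l),
      fun a _ => by rw [mAct_one]⟩
  | @insert i t hi ih =>
    have hki : k ≤ (i : ℕ) := ht i (Finset.mem_insert_self i t)
    have h1 : ∀ (c : ℤ) (w : HypIdx g → ℤ), True → ∃ E ∈ Hgen g ⊓ Stab g k,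
        mAct E w = Function.update w (Sum.inl i) (w (Sum.inl i) + c * w (Sum.inr i))
          ∧ True := by
      intro c w _
      exact ⟨uDiag i c, ⟨uDiag_mem i c, uDiag_mem_Stab i c hki⟩, uDiag_act i c w, trivial⟩
    have h2 : ∀ (c : ℤ) (w : HypIdx g → ℤ), True → ∃ E ∈ Hgen g ⊓ Stab g k,
        mAct E w = Function.update w (Sum.inr i) (w (Sum.inr i) + c * w (Sum.inl i))
          ∧ True := by
      intro c w _
      exact ⟨lDiag i c, ⟨lDiag_mem i c, lDiag_mem_Stab i c hki⟩, lDiag_act i c w, trivial⟩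
    obtain ⟨E₁, hE₁, d, hE₁act, -⟩ :=
      euclid_pair (Hgen g ⊓ Stab g k) (Sum.inl i) (Sum.inr i) (by simp)
        (fun _ => True) h1 h2 (v (Sum.inr i)).natAbs v le_rfl trivial
    set v₁ := Function.update (Function.update v (Sum.inl i) d) (Sum.inr i) 0 with hv₁def
    obtain ⟨E₂, hE₂, hz, hunch⟩ := ih (fun l hl => ht l (Finset.mem_insert_of_mem hl)) v₁
    refine ⟨E₂ * E₁, mul_mem hE₂ hE₁, ?_, ?_⟩
    · intro l hl
      rw [mAct_mul, hE₁act]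
      rcases Finset.mem_insert.mp hl with rfl | hlt
      · rw [hunch (Sum.inr l) ?_]
        · rw [hv₁def, Function.update_self]
        · intro m hm
          have : l ≠ m := fun h => by subst h; exact hi hm
          simp [this]
      · exact hz l hlt
    · intro a ha
      rw [mAct_mul, hE₁act]
      rw [hunch a fun m hm => ha m (Finset.mem_insert_of_mem hm)]
      obtain ⟨ha1, ha2⟩ := ha i (Finset.mem_insert_self i t)
      rw [hv₁def, Function.update_of_ne ha2, Function.update_of_ne ha1]

theorem phaseB (k : Fin g) (t : Finset (Fin g)) (ht : ∀ j ∈ t, (k : ℕ) ≤ (j : ℕ) ∧ j ≠ k)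
    (v : HypIdx g → ℤ) (hv : ∀ i : Fin g, v (Sum.inr i) = 0) :
    ∃ E ∈ Hgen g ⊓ Stab g (k : ℕ),
      (∀ j ∈ t, mAct E v (Sum.inl j) = 0) ∧
      (∀ i : Fin g, mAct E v (Sum.inr i) = 0) ∧
      (∀ a : HypIdx g, a ≠ Sum.inl k → (∀ j ∈ t, a ≠ Sum.inl j) → mAct E v a = v a) := by
  induction t using Finset.induction_on generalizing v with
  | empty =>
    exact ⟨1, one_mem _, fun l hl => absurd hl (Finset.notMem_empty l),
      fun i => by rw [mAct_one]; exact hv i, fun a _ _ => by rw [mAct_one]⟩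
  | @insert j t hj ih =>
    obtain ⟨hkj, hjk⟩ := ht j (Finset.mem_insert_self j t)
    have hkj' : k ≠ j := hjk.symm
    have h1 : ∀ (c : ℤ) (w : HypIdx g → ℤ), (∀ i, w (Sum.inr i) = 0) →
        ∃ E ∈ Hgen g ⊓ Stab g (k : ℕ),
        mAct E w = Function.update w (Sum.inl k) (w (Sum.inl k) + c * w (Sum.inl j))
          ∧ (∀ i, Function.update w (Sum.inl k)
              (w (Sum.inl k) + c * w (Sum.inl j)) (Sum.inr i) = 0) := by
      intro c w hw
      refine ⟨aOp k j hkj' c, ⟨aOp_mem_Hgen hkj' c, aOp_mem_Stab hkj' c le_rfl hkj⟩, ?_, ?_⟩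
      · rw [aOp_act hkj' c, hw j, hw k]
        simp only [mul_zero, sub_zero]
        rw [Function.update_eq_self_iff.mpr ?_]
        rw [Function.update_of_ne (by simp)]
        exact (hw j).symm
      · intro i
        rw [Function.update_of_ne (by simp)]
        exact hw i
    have h2 : ∀ (c : ℤ) (w : HypIdx g → ℤ), (∀ i, w (Sum.inr i) = 0) →
        ∃ E ∈ Hgen g ⊓ Stab g (k : ℕ),
        mAct E w = Function.update w (Sum.inl j) (w (Sum.inl j) + c * w (Sum.inl k))
          ∧ (∀ i, Function.update w (Sum.inl j)
              (w (Sum.inl j) + c * w (Sum.inl k)) (Sum.inr i) = 0) := by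
      intro c w hw
      refine ⟨aOp j k hjk c, ⟨aOp_mem_Hgen hjk c, aOp_mem_Stab hjk c hkj le_rfl⟩, ?_, ?_⟩
      · rw [aOp_act hjk c, hw k, hw j]
        simp only [mul_zero, sub_zero]
        rw [Function.update_eq_self_iff.mpr ?_]
        rw [Function.update_of_ne (by simp)]
        exact (hw k).symm
      · intro i
        rw [Function.update_of_ne (by simp)]
        exact hw i
    obtain ⟨E₁, hE₁, d, hE₁act, hP₁⟩ :=
      euclid_pair (Hgen g ⊓ Stab g (k : ℕ)) (Sum.inl k) (Sum.inl j)
        (by simp [hkj']) (fun w => ∀ i, w (Sum.inr i) = 0) h1 h2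
        (v (Sum.inl j)).natAbs v le_rfl hv
    set v₁ := Function.update (Function.update v (Sum.inl k) d) (Sum.inl j) 0 with hv₁def
    obtain ⟨E₂, hE₂, hz, hrz, hunch⟩ :=
      ih (fun l hl => ht l (Finset.mem_insert_of_mem hl)) v₁ hP₁
    refine ⟨E₂ * E₁, mul_mem hE₂ hE₁, ?_, ?_, ?_⟩
    · intro l hl
      rw [mAct_mul, hE₁act]
      rcases Finset.mem_insert.mp hl with rfl | hlt
      · rw [hunch (Sum.inl l) ?_ ?_]
        · rw [hv₁def, Function.update_self]
        · simp [hjk]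
        · intro m hm
          have : l ≠ m := fun h => by subst h; exact hj hm
          simp [this]
      · exact hz l hlt
    · intro i
      rw [mAct_mul, hE₁act]
      exact hrz i
    · intro a hak ha
      rw [mAct_mul, hE₁act]
      rw [hunch a hak fun m hm => ha m (Finset.mem_insert_of_mem hm)]
      rw [hv₁def, Function.update_of_ne (ha j (Finset.mem_insert_self j t)),
        Function.update_of_ne hak]

theorem phaseC (k : Fin g) (t : Finset (Fin g)) (ht : ∀ j ∈ t, (k : ℕ) < (j : ℕ))
    (v : HypIdx g → ℤ) (hvk : v (Sum.inr k) = 1) :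
    ∃ E ∈ (Hgen g ⊓ Stab g (k : ℕ)) ⊓ StabV (eb k),
      (∀ j ∈ t, mAct E v (Sum.inl j) = 0 ∧ mAct E v (Sum.inr j) = 0) ∧
      (∀ a : HypIdx g, (∀ j ∈ t, a ≠ Sum.inl j ∧ a ≠ Sum.inr j) → mAct E v a = v a) := by
  induction t using Finset.induction_on generalizing v with
  | empty =>
    exact ⟨1, one_mem _, fun l hl => absurd hl (Finset.notMem_empty l),
      fun a _ => by rw [mAct_one]⟩
  | @insert j t hj ih =>
    have hkj : (k : ℕ) < (j : ℕ) := ht j (Finset.mem_insert_self j t)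
    have hkj' : k ≠ j := fun h => by subst h; omega
    have hkle : (k : ℕ) ≤ (j : ℕ) := le_of_lt hkj
    have h1 : ∀ (c : ℤ) (w : HypIdx g → ℤ), True →
        ∃ E ∈ (Hgen g ⊓ Stab g (k : ℕ)) ⊓ StabV (eb k),
        mAct E w = Function.update w (Sum.inl j) (w (Sum.inl j) + c * w (Sum.inr j))
          ∧ True := by
      intro c w _
      exact ⟨uDiag j c, ⟨⟨uDiag_mem j c, uDiag_mem_Stab j c hkle⟩,
        uDiag_fix j c (by simp)⟩, uDiag_act j c w, trivial⟩
    have h2 : ∀ (c : ℤ) (w : HypIdx g → ℤ), True →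
        ∃ E ∈ (Hgen g ⊓ Stab g (k : ℕ)) ⊓ StabV (eb k),
        mAct E w = Function.update w (Sum.inr j) (w (Sum.inr j) + c * w (Sum.inl j))
          ∧ True := by
      intro c w _
      refine ⟨lDiag j c, ⟨⟨lDiag_mem j c, lDiag_mem_Stab j c hkle⟩,
        lDiag_fix j c ?_⟩, lDiag_act j c w, trivial⟩
      rw [eb_apply_inl]
      simp [hkj'.symm]
    obtain ⟨E₁, hE₁, d, hE₁act, -⟩ :=
      euclid_pair ((Hgen g ⊓ Stab g (k : ℕ)) ⊓ StabV (eb k)) (Sum.inl j) (Sum.inr j)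
        (by simp) (fun _ => True) h1 h2 (v (Sum.inr j)).natAbs v le_rfl trivial
    set v₁ := Function.update (Function.update v (Sum.inl j) d) (Sum.inr j) 0 with hv₁def
    have hv₁rk : v₁ (Sum.inr k) = 1 := by
      rw [hv₁def, Function.update_of_ne (by simp [hkj']),
        Function.update_of_ne (by simp)]
      exact hvk
    have hv₁rj : v₁ (Sum.inr j) = 0 := by rw [hv₁def, Function.update_self]
    have hv₁lj : v₁ (Sum.inl j) = d := by
      rw [hv₁def, Function.update_of_ne (by simp), Function.update_self]
    set E₂ := uMix k j (-d) with hE₂def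
    have hE₂mem : E₂ ∈ (Hgen g ⊓ Stab g (k : ℕ)) ⊓ StabV (eb k) :=
      ⟨⟨uMix_mem k j (-d), uMix_mem_Stab hkj' (-d) le_rfl hkle⟩,
        uMix_fix hkj' (-d) (by simp) (by simp)⟩
    have hE₂act : mAct E₂ v₁ = Function.update v₁ (Sum.inl j) 0 := by
      rw [hE₂def, uMix_act hkj' (-d) v₁, hv₁rj, hv₁rk, hv₁lj]
      simp only [mul_zero, add_zero, mul_one]
      rw [Function.update_eq_self]
      congr 1
      ring
    set v₂ := Function.update v₁ (Sum.inl j) 0 with hv₂def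
    have hv₂rk : v₂ (Sum.inr k) = 1 := by
      rw [hv₂def, Function.update_of_ne (by simp)]
      exact hv₁rk
    obtain ⟨E₃, hE₃, hz, hunch⟩ :=
      ih (fun l hl => ht l (Finset.mem_insert_of_mem hl)) v₂ hv₂rk
    refine ⟨E₃ * E₂ * E₁, mul_mem (mul_mem hE₃ hE₂mem) hE₁, ?_, ?_⟩
    · intro l hl
      rw [mAct_mul, mAct_mul, hE₁act, hE₂act]
      rcases Finset.mem_insert.mp hl with rfl | hlt
      · have hlnotint : ∀ m ∈ t, (Sum.inl l : HypIdx g) ≠ Sum.inl m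
            ∧ (Sum.inl l : HypIdx g) ≠ Sum.inr m := by
          intro m hm
          have : l ≠ m := fun h => by subst h; exact hj hm
          simp [this]
        have hrnotint : ∀ m ∈ t, (Sum.inr l : HypIdx g) ≠ Sum.inl m
            ∧ (Sum.inr l : HypIdx g) ≠ Sum.inr m := by
          intro m hm
          have : l ≠ m := fun h => by subst h; exact hj hm
          simp [this]
        constructor
        · rw [hunch (Sum.inl l) hlnotint, hv₂def, Function.update_self]
        · rw [hunch (Sum.inr l) hrnotint, hv₂def, Function.update_of_ne (by simp)]
          exact hv₁rj
      · exact hz l hlt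
    · intro a ha
      rw [mAct_mul, mAct_mul, hE₁act, hE₂act]
      rw [hunch a fun m hm => ha m (Finset.mem_insert_of_mem hm)]
      obtain ⟨ha1, ha2⟩ := ha j (Finset.mem_insert_self j t)
      rw [hv₂def, Function.update_of_ne ha1, hv₁def, Function.update_of_ne ha2,
        Function.update_of_ne ha1]

end SpPerfect
namespace SpPerfect

open Matrix Subgroup Finset

variable {g : ℕ}

theorem Jmat_mulVec (v : HypIdx g → ℤ) :
    Jmat g *ᵥ v = Sum.elim (v ∘ Sum.inr) (-(v ∘ Sum.inl)) := by
  rw [Jmat, fromBlocks_mulVec]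
  simp [Matrix.neg_mulVec]

@[simp] theorem Jmat_app_ll (i j : Fin g) : Jmat g (Sum.inl i) (Sum.inl j) = 0 := rfl
@[simp] theorem Jmat_app_rr (i j : Fin g) : Jmat g (Sum.inr i) (Sum.inr j) = 0 := rfl
theorem Jmat_app_lr (i j : Fin g) :
    Jmat g (Sum.inl i) (Sum.inr j) = if i = j then 1 else 0 := by
  simp [Jmat, Matrix.one_apply]
theorem Jmat_app_rl (i j : Fin g) :
    Jmat g (Sum.inr i) (Sum.inl j) = -(if i = j then 1 else 0) := by
  have : Jmat g (Sum.inr i) (Sum.inl j) = (-1 : Matrix (Fin g) (Fin g) ℤ) i j := rfl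
  rw [this, Matrix.neg_apply, Matrix.one_apply]

theorem sympl_cols (A : ↥(Sp g)) (a b : HypIdx g) :
    mAct A (Pi.single a 1) ⬝ᵥ (Jmat g *ᵥ mAct A (Pi.single b 1)) = Jmat g a b := by
  have hA' : A.val.valᵀ * (Jmat g * A.val.val) = Jmat g := by
    rw [← Matrix.mul_assoc]; exact A.2
  have h := congrFun (congrFun hA' a) b
  rw [Matrix.mul_apply] at h
  simp only [Matrix.transpose_apply] at h
  rw [mAct, mAct, Matrix.mulVec_mulVec, Matrix.mulVec_single, Matrix.mulVec_single]
  simpa [dotProduct, Matrix.mul_apply, mul_one] using h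

theorem pair_entry_e (A : ↥(Sp g)) (b : HypIdx g) (i : Fin g)
    (hfix : mAct A (eb i) = eb i) :
    mAct A (Pi.single b 1) (Sum.inr i) = Jmat g (Sum.inl i) b := by
  have h := sympl_cols A (Sum.inl i) b
  have he : mAct A (Pi.single (Sum.inl i) 1) = eb i := hfix
  rw [he, eb, single_dotProduct, one_mul, Jmat_mulVec] at h
  simpa using h

theorem pair_entry_f (A : ↥(Sp g)) (b : HypIdx g) (i : Fin g)
    (hfix : mAct A (fb i) = fb i) :
    mAct A (Pi.single b 1) (Sum.inl i) = -(Jmat g (Sum.inr i) b) := by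
  have h := sympl_cols A (Sum.inr i) b
  have he : mAct A (Pi.single (Sum.inr i) 1) = fb i := hfix
  rw [he, fb, single_dotProduct, one_mul, Jmat_mulVec] at h
  simp only [Sum.elim_inr, Pi.neg_apply, Function.comp_apply] at h
  omega

theorem act_unimodular (E : ↥(Sp g)) (v : HypIdx g → ℤ) (h : ∃ z, z ⬝ᵥ v = 1) :
    ∃ z, z ⬝ᵥ mAct E v = 1 := by
  obtain ⟨z, hz⟩ := h
  refine ⟨z ᵥ* (E⁻¹).val.val, ?_⟩
  rw [mAct, dotProduct_mulVec, vecMul_vecMul]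
  have hinv : (E⁻¹).val.val * E.val.val = 1 := by
    rw [← sp_mul_val, inv_mul_cancel]
    rfl
  rw [hinv, vecMul_one, hz]

theorem col_unimodular (A : ↥(Sp g)) (a : HypIdx g) :
    ∃ z, z ⬝ᵥ mAct A (Pi.single a 1) = 1 := by
  apply act_unimodular
  exact ⟨Pi.single a 1, by rw [single_dotProduct, one_mul, Pi.single_eq_same]⟩

theorem columnReduce (k : Fin g) (v : HypIdx g → ℤ) (huni : ∃ z, z ⬝ᵥ v = 1)
    (hzero : ∀ i : Fin g, (i : ℕ) < (k : ℕ) → v (Sum.inl i) = 0 ∧ v (Sum.inr i) = 0) :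
    ∃ E ∈ Hgen g ⊓ Stab g (k : ℕ), mAct E v = eb k := by
  classical
  obtain ⟨E₁, hE₁, hz₁, hu₁⟩ := phaseA (k : ℕ)
    (Finset.univ.filter fun i : Fin g => (k : ℕ) ≤ (i : ℕ))
    (fun i hi => (Finset.mem_filter.mp hi).2) v
  set v₁ := mAct E₁ v with hv₁def
  have hv₁r : ∀ i : Fin g, v₁ (Sum.inr i) = 0 := by
    intro i
    by_cases h : (k : ℕ) ≤ (i : ℕ)
    · exact hz₁ i (Finset.mem_filter.mpr ⟨Finset.mem_univ i, h⟩)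
    · rw [hu₁ (Sum.inr i) ?_]
      · exact (hzero i (by omega)).2
      · intro m hm
        have hkm : (k : ℕ) ≤ (m : ℕ) := (Finset.mem_filter.mp hm).2
        have : i ≠ m := fun he => by subst he; omega
        simp [this]
  have hv₁l : ∀ i : Fin g, (i : ℕ) < (k : ℕ) → v₁ (Sum.inl i) = 0 := by
    intro i hi
    rw [hu₁ (Sum.inl i) ?_]
    · exact (hzero i hi).1
    · intro m hm
      have hkm : (k : ℕ) ≤ (m : ℕ) := (Finset.mem_filter.mp hm).2
      have : i ≠ m := fun he => by subst he; omega
      simp [this]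
  obtain ⟨E₂, hE₂, hz₂, hrz₂, hu₂⟩ := phaseB k
    (Finset.univ.filter fun j : Fin g => (k : ℕ) ≤ (j : ℕ) ∧ j ≠ k)
    (fun j hj => (Finset.mem_filter.mp hj).2) v₁ hv₁r
  set v₂ := mAct E₂ v₁ with hv₂def
  have hv₂zero : ∀ a : HypIdx g, a ≠ Sum.inl k → v₂ a = 0 := by
    intro a ha
    rcases a with i | i
    · by_cases h : (k : ℕ) ≤ (i : ℕ)
      · have : i ≠ k := fun he => by subst he; exact ha rfl
        exact hz₂ i (Finset.mem_filter.mpr ⟨Finset.mem_univ i, h, this⟩)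
      · rw [hu₂ (Sum.inl i) ?_ ?_]
        · exact hv₁l i (by omega)
        · have : i ≠ k := fun he => by subst he; omega
          simp [this]
        · intro m hm
          have hm2 := (Finset.mem_filter.mp hm).2
          have : i ≠ m := fun he => by subst he; omega
          simp [this]
    · exact hrz₂ i
  -- the remaining coordinate is a unit
  obtain ⟨z, hz⟩ := act_unimodular E₂ v₁ (act_unimodular E₁ v huni)
  have hdot : z ⬝ᵥ v₂ = z (Sum.inl k) * v₂ (Sum.inl k) := by
    rw [dotProduct]
    apply Finset.sum_eq_single (Sum.inl k)
    · intro a _ ha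
      rw [hv₂zero a ha, mul_zero]
    · intro h
      exact absurd (Finset.mem_univ _) h
  have hunit : IsUnit (v₂ (Sum.inl k)) := by
    apply IsUnit.of_mul_eq_one (z (Sum.inl k))
    rw [mul_comm, ← hdot, hz]
  rcases Int.isUnit_iff.mp hunit with hc | hc
  · -- v₂ = eb k
    refine ⟨E₂ * E₁, mul_mem hE₂ hE₁, ?_⟩
    rw [mAct_mul, ← hv₁def, ← hv₂def]
    funext a
    rcases Classical.em (a = Sum.inl k) with rfl | ha
    · rw [hc, eb, Pi.single_eq_same]
    · rw [hv₂zero a ha, eb, Pi.single_eq_of_ne ha]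
  · -- sign fix
    refine ⟨(lDiag k 1 * uDiag k (-2) * lDiag k 1) * (E₂ * E₁),
      mul_mem (mul_mem (mul_mem
        ⟨lDiag_mem k 1, lDiag_mem_Stab k 1 le_rfl⟩
        ⟨uDiag_mem k (-2), uDiag_mem_Stab k (-2) le_rfl⟩)
        ⟨lDiag_mem k 1, lDiag_mem_Stab k 1 le_rfl⟩)
        (mul_mem hE₂ hE₁), ?_⟩
    have hact12 : mAct (E₂ * E₁) v = v₂ := by rw [mAct_mul, ← hv₁def, ← hv₂def]
    have h0 : v₂ (Sum.inr k) = 0 := hv₂zero _ (by simp)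
    have hw₁ : mAct (lDiag k 1) v₂ = Function.update v₂ (Sum.inr k) (-1) := by
      rw [lDiag_act, h0, hc]; norm_num
    set w₁ := Function.update v₂ (Sum.inr k) (-1) with hw₁def
    have hw₂ : mAct (uDiag k (-2)) w₁ = Function.update w₁ (Sum.inl k) 1 := by
      rw [uDiag_act, hw₁def, Function.update_self, Function.update_of_ne (by simp), hc]
      norm_num
    set w₂ := Function.update w₁ (Sum.inl k) 1 with hw₂def
    have hw₃ : mAct (lDiag k 1) w₂ = Function.update w₂ (Sum.inr k) 0 := by
      rw [lDiag_act, hw₂def, Function.update_self, Function.update_of_ne (by simp),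
        hw₁def, Function.update_self]
      norm_num
    rw [mAct_mul, hact12, mAct_mul, hw₁, mAct_mul, hw₂, hw₃]
    funext a
    rcases Classical.em (a = Sum.inr k) with rfl | har
    · rw [Function.update_self, eb, Pi.single_eq_of_ne (by simp)]
    · rcases Classical.em (a = Sum.inl k) with rfl | hal
      · rw [Function.update_of_ne (by simp), hw₂def, Function.update_self, eb,
          Pi.single_eq_same]
      · rw [Function.update_of_ne har, hw₂def, Function.update_of_ne hal, hw₁def,
          Function.update_of_ne har, hv₂zero a hal, eb, Pi.single_eq_of_ne hal]

theorem partnerReduce (k : Fin g) (w : HypIdx g → ℤ) (hw1 : w (Sum.inr k) = 1)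
    (hzero : ∀ i : Fin g, (i : ℕ) < (k : ℕ) → w (Sum.inl i) = 0 ∧ w (Sum.inr i) = 0) :
    ∃ E ∈ (Hgen g ⊓ Stab g (k : ℕ)) ⊓ StabV (eb k), mAct E w = fb k := by
  classical
  obtain ⟨E₁, hE₁, hz₁, hu₁⟩ := phaseC k
    (Finset.univ.filter fun j : Fin g => (k : ℕ) < (j : ℕ))
    (fun j hj => (Finset.mem_filter.mp hj).2) w hw1
  set w₁ := mAct E₁ w with hw₁def
  have hnotin : ∀ (i : Fin g), (i : ℕ) ≤ (k : ℕ) → ∀ m ∈ (Finset.univ.filter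
      fun j : Fin g => (k : ℕ) < (j : ℕ)), (Sum.inl i : HypIdx g) ≠ Sum.inl m
        ∧ (Sum.inl i : HypIdx g) ≠ Sum.inr m := by
    intro i hi m hm
    have := (Finset.mem_filter.mp hm).2
    have : i ≠ m := fun he => by subst he; omega
    simp [this]
  have hnotin' : ∀ (i : Fin g), (i : ℕ) ≤ (k : ℕ) → ∀ m ∈ (Finset.univ.filter
      fun j : Fin g => (k : ℕ) < (j : ℕ)), (Sum.inr i : HypIdx g) ≠ Sum.inl m
        ∧ (Sum.inr i : HypIdx g) ≠ Sum.inr m := by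
    intro i hi m hm
    have := (Finset.mem_filter.mp hm).2
    have : i ≠ m := fun he => by subst he; omega
    simp [this]
  have hw₁rk : w₁ (Sum.inr k) = 1 := by
    rw [hu₁ (Sum.inr k) (hnotin' k le_rfl)]; exact hw1
  set E₂ := uDiag k (-(w₁ (Sum.inl k))) with hE₂def
  refine ⟨E₂ * E₁, mul_mem ⟨⟨uDiag_mem _ _, uDiag_mem_Stab _ _ le_rfl⟩,
      uDiag_fix _ _ (by simp)⟩ hE₁, ?_⟩
  rw [mAct_mul, ← hw₁def, hE₂def, uDiag_act, hw₁rk]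
  funext a
  rcases a with i | i
  · rcases Classical.em (i = k) with rfl | hik
    · rw [Function.update_self]
      rw [fb]
      rw [Pi.single_eq_of_ne (by simp)]
      ring
    · rw [Function.update_of_ne (by simp [hik])]
      rcases lt_or_ge (i : ℕ) (k : ℕ) with h | h
      · rw [hu₁ (Sum.inl i) (hnotin i (by omega))]
        rw [fb, Pi.single_eq_of_ne (by simp)]
        exact (hzero i h).1
      · have hklt : (k : ℕ) < (i : ℕ) := by
          rcases Nat.lt_or_ge (k : ℕ) (i : ℕ) with h2 | h2
          · exact h2
          · exfalso; exact hik (Fin.ext (by omega))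
        rw [fb, Pi.single_eq_of_ne (by simp)]
        exact (hz₁ i (Finset.mem_filter.mpr ⟨Finset.mem_univ i, hklt⟩)).1
  · rw [Function.update_of_ne (by simp)]
    rcases Classical.em (i = k) with rfl | hik
    · rw [hw₁rk, fb, Pi.single_eq_same]
    · rcases lt_or_ge (i : ℕ) (k : ℕ) with h | h
      · rw [hu₁ (Sum.inr i) (hnotin' i (by omega))]
        rw [fb, Pi.single_eq_of_ne (by simp [hik])]
        exact (hzero i h).2
      · have hklt : (k : ℕ) < (i : ℕ) := by
          rcases Nat.lt_or_ge (k : ℕ) (i : ℕ) with h2 | h2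
          · exact h2
          · exfalso; exact hik (Fin.ext (by omega))
        rw [fb, Pi.single_eq_of_ne (by simp [hik])]
        exact (hz₁ i (Finset.mem_filter.mpr ⟨Finset.mem_univ i, hklt⟩)).2

end SpPerfect
namespace SpPerfect

open Matrix Subgroup

variable {g : ℕ}

theorem sp_eq_one_of_fix (A : ↥(Sp g))
    (h : ∀ b : HypIdx g, mAct A (Pi.single b 1) = Pi.single b 1) : A = 1 := by
  apply spEq
  ext a b
  have hb := congrFun (h b) a
  simp only [mAct, Matrix.mulVec_single_one, Matrix.col_apply] at hb
  show A.val.val a b = (1 : Matrix (HypIdx g) (HypIdx g) ℤ) a b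
  rw [hb, Matrix.one_apply, Pi.single_apply]

theorem stab_mem_Hgen : ∀ (d k : ℕ), k + d = g → ∀ A : ↥(Sp g), A ∈ Stab g k → A ∈ Hgen g := by
  intro d
  induction d with
  | zero =>
    intro k hk A hA
    have hA1 : A = 1 := by
      apply sp_eq_one_of_fix
      intro b
      rcases b with i | i
      · exact ((hA i (by omega)).1 : mAct A (eb i) = eb i)
      · exact ((hA i (by omega)).2 : mAct A (fb i) = fb i)
    rw [hA1]
    exact one_mem _
  | succ d ih =>
    intro k hk A hA
    have hklt : k < g := by omega
    set kF : Fin g := ⟨k, hklt⟩ with hkFdef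
    set v := mAct A (eb kF) with hvdef
    have hvzero : ∀ i : Fin g, (i : ℕ) < (kF : ℕ) → v (Sum.inl i) = 0 ∧ v (Sum.inr i) = 0 := by
      intro i hi
      constructor
      · have h := pair_entry_f A (Sum.inl kF) i (hA i hi).2
        rw [Jmat_app_rl] at h
        have hik : i ≠ kF := fun he => by subst he; omega
        have h' : v (Sum.inl i) = - -if i = kF then 1 else 0 := h
        rw [h']
        simp [hik]
      · have h := pair_entry_e A (Sum.inl kF) i (hA i hi).1
        rw [Jmat_app_ll] at h
        exact (h : v (Sum.inr i) = 0)
    obtain ⟨E₁, ⟨hE₁H, hE₁S⟩, hE₁act⟩ :=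
      columnReduce kF v (col_unimodular A (Sum.inl kF)) hvzero
    set A₁ := E₁ * A with hA₁def
    have hA₁stab : A₁ ∈ Stab g k := mul_mem hE₁S hA
    have hA₁e : mAct A₁ (eb kF) = eb kF := by
      rw [hA₁def, mAct_mul, ← hvdef, hE₁act]
    set w := mAct A₁ (fb kF) with hwdef
    have hw1 : w (Sum.inr kF) = 1 := by
      have h := pair_entry_e A₁ (Sum.inr kF) kF hA₁e
      rw [Jmat_app_lr] at h
      have h' : w (Sum.inr kF) = if kF = kF then 1 else 0 := h
      rw [h']
      simp
    have hwzero : ∀ i : Fin g, (i : ℕ) < (kF : ℕ)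
        → w (Sum.inl i) = 0 ∧ w (Sum.inr i) = 0 := by
      intro i hi
      constructor
      · have h := pair_entry_f A₁ (Sum.inr kF) i (hA₁stab i hi).2
        rw [Jmat_app_rr] at h
        have h' : w (Sum.inl i) = -0 := h
        rw [h']
        ring
      · have h := pair_entry_e A₁ (Sum.inr kF) i (hA₁stab i hi).1
        rw [Jmat_app_lr] at h
        have hik : i ≠ kF := fun he => by subst he; omega
        have h' : w (Sum.inr i) = if i = kF then 1 else 0 := h
        rw [h']
        simp [hik]
    obtain ⟨E₂, ⟨⟨hE₂H, hE₂S⟩, hE₂e⟩, hE₂act⟩ := partnerReduce kF w hw1 hwzero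
    set A₂ := E₂ * A₁ with hA₂def
    have hA₂stab : A₂ ∈ Stab g (k + 1) := by
      intro i hi
      rcases Nat.lt_or_ge (i : ℕ) k with h | h
      · exact ⟨mul_mem (hE₂S i h).1 (hA₁stab i h).1, mul_mem (hE₂S i h).2 (hA₁stab i h).2⟩
      · have hkFval : (kF : ℕ) = k := rfl
        have hik : i = kF := Fin.ext (by omega)
        rw [hik]
        constructor
        · show mAct A₂ (eb kF) = eb kF
          rw [hA₂def, mAct_mul, hA₁e]
          exact hE₂e
        · show mAct A₂ (fb kF) = fb kF
          rw [hA₂def, mAct_mul, ← hwdef]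
          exact hE₂act
    have hA₂H : A₂ ∈ Hgen g := ih (k + 1) (by omega) A₂ hA₂stab
    have : A = (E₂ * E₁)⁻¹ * A₂ := by
      rw [hA₂def, hA₁def]
      group
    rw [this]
    exact mul_mem (inv_mem (mul_mem hE₂H hE₁H)) hA₂H

theorem sp_mem_Hgen (A : ↥(Sp g)) : A ∈ Hgen g :=
  stab_mem_Hgen g 0 (by omega) A (fun i hi => absurd hi (by omega))

end SpPerfect

/-- For every `g ≥ 3`, the symplectic group `Sp_{2g}(ℤ)` is perfect;
equivalently, its abelianisation is trivial. -/
theorem Sp_perfect (g : ℕ) (hg : 3 ≤ g) :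
    commutator ↥(Sp g) = ⊤ ∧ Subsingleton (Abelianization ↥(Sp g)) := by
  have h1 : commutator ↥(Sp g) = ⊤ := by
    rw [eq_top_iff]
    intro A _
    have hle : SpPerfect.Hgen g ≤ commutator ↥(Sp g) := by
      rw [SpPerfect.Hgen]
      apply Subgroup.closure_le _ |>.mpr
      rintro x (⟨B, hB, rfl⟩ | ⟨C, hC, rfl⟩)
      · exact SpPerfect.spTU_mem_commutator hg B hB
      · exact SpPerfect.spTL_mem_commutator hg C hC
    exact hle (SpPerfect.sp_mem_Hgen A)
  refine ⟨h1, ?_⟩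
  have h2 : Subsingleton (↥(Sp g) ⧸ commutator ↥(Sp g)) := by
    rw [h1]
    exact QuotientGroup.subsingleton_quotient_top
  exact h2
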